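/- Let u and v be m×m complex matrices with v invertible. Then the Frobenius-type norm satisfies ‖v⁻¹ ⋆ u ⋆ v‖ ≤ (m+1)! · (‖v‖^m / det(v)) · ‖u‖, where ⋆ is matrix multiplication and ‖w‖² = Σ_{i,j} |w_{i,j}|² is the squared Frobenius norm (assuming det(v) > 0 real, or interpreting the bound with |det(v)|). -/

import Mathlib

open Matrix Finset

/-- Frobenius norm of a complex matrix. -/
noncomputable def frobNorm {m : ℕ} (w : Matrix (Fin m) (Fin m) ℂ) : ℝ :=
  Real.sqrt (∑ i, ∑ j, ‖w i j‖ ^ 2)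

section aux

attribute [local instance] Matrix.frobeniusSeminormedAddCommGroup Matrix.frobeniusNormedSpace

lemma frobNorm_eq_norm {m : ℕ} (w : Matrix (Fin m) (Fin m) ℂ) : frobNorm w = ‖w‖ := by
  rw [frobNorm, Matrix.frobenius_norm_def, Real.sqrt_eq_rpow]
  congr 1
  refine Finset.sum_congr rfl fun i _ => Finset.sum_congr rfl fun j _ => ?_
  rw [show ((2:ℝ) = ((2:ℕ):ℝ)) by norm_num, Real.rpow_natCast]

lemma frobNorm_nonneg {m : ℕ} (w : Matrix (Fin m) (Fin m) ℂ) : 0 ≤ frobNorm w :=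
  Real.sqrt_nonneg _

lemma frobNorm_mul_le {m : ℕ} (a b : Matrix (Fin m) (Fin m) ℂ) :
    frobNorm (a * b) ≤ frobNorm a * frobNorm b := by
  simp only [frobNorm_eq_norm]
  exact Matrix.frobenius_norm_mul a b

lemma frobNorm_smul {m : ℕ} (z : ℂ) (w : Matrix (Fin m) (Fin m) ℂ) :
    frobNorm (z • w) = ‖z‖ * frobNorm w := by
  simp only [frobNorm_eq_norm]
  rw [norm_smul]

lemma abs_entry_le {m : ℕ} (w : Matrix (Fin m) (Fin m) ℂ) (i j : Fin m) :
    ‖w i j‖ ≤ frobNorm w := by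
  rw [← Real.sqrt_sq (norm_nonneg (w i j))]
  apply Real.sqrt_le_sqrt
  calc ‖w i j‖ ^ 2 ≤ ∑ j', ‖w i j'‖ ^ 2 :=
        Finset.single_le_sum (f := fun j' => ‖w i j'‖ ^ 2) (fun k _ => sq_nonneg _) (Finset.mem_univ j)
    _ ≤ ∑ i', ∑ j', ‖w i' j'‖ ^ 2 :=
        Finset.single_le_sum (f := fun i' => ∑ j', ‖w i' j'‖ ^ 2)
          (fun k _ => Finset.sum_nonneg fun _ _ => sq_nonneg _) (Finset.mem_univ i)

end aux

lemma abs_det_le {n : ℕ} (B : Matrix (Fin n) (Fin n) ℂ) (c : ℝ) (hc : 0 ≤ c)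
    (h : ∀ a b, ‖B a b‖ ≤ c) :
    ‖B.det‖ ≤ n.factorial * c ^ n := by
  rw [Matrix.det_apply']
  refine le_trans (norm_sum_le _ _) ?_
  have hterm : ∀ σ : Equiv.Perm (Fin n),
      ‖(Equiv.Perm.sign σ : ℂ) * ∏ i, B (σ i) i‖ ≤ c ^ n := by
    intro σ
    rw [norm_mul, norm_prod]
    have hsign : ‖((Equiv.Perm.sign σ : ℤ) : ℂ)‖ = 1 := by
      rcases Int.units_eq_one_or (Equiv.Perm.sign σ) with h | h <;> rw [h] <;> simp
    rw [hsign, one_mul]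
    calc ∏ i, ‖B (σ i) i‖ ≤ ∏ _i : Fin n, c :=
          Finset.prod_le_prod (fun _ _ => norm_nonneg _) (fun i _ => h _ _)
      _ = c ^ n := by simp
  calc ∑ σ : Equiv.Perm (Fin n), ‖(Equiv.Perm.sign σ : ℂ) * ∏ i, B (σ i) i‖
      ≤ ∑ _σ : Equiv.Perm (Fin n), c ^ n := Finset.sum_le_sum fun σ _ => hterm σ
    _ = n.factorial * c ^ n := by
        rw [Finset.sum_const, Finset.card_univ, Fintype.card_perm, Fintype.card_fin,
          nsmul_eq_mul]

lemma frobNorm_adjugate_le {n : ℕ} (v : Matrix (Fin (n + 1)) (Fin (n + 1)) ℂ) :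
    frobNorm v.adjugate ≤ (n + 1).factorial * frobNorm v ^ n := by
  have hentry : ∀ i j, ‖v.adjugate i j‖ ≤ n.factorial * frobNorm v ^ n := by
    intro i j
    rw [Matrix.adjugate_fin_succ_eq_det_submatrix, norm_mul]
    have h1 : ‖(-1 : ℂ) ^ (j + i : ℕ)‖ = 1 := by
      rw [norm_pow]; simp
    rw [h1, one_mul]
    exact abs_det_le _ _ (frobNorm_nonneg v) (fun a b => abs_entry_le v _ _)
  set K : ℝ := n.factorial * frobNorm v ^ n with hK
  have hK0 : 0 ≤ K := mul_nonneg (Nat.cast_nonneg _) (pow_nonneg (frobNorm_nonneg v) n)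
  have h2 : frobNorm v.adjugate ≤ Real.sqrt (∑ _i : Fin (n + 1), ∑ _j : Fin (n + 1), K ^ 2) := by
    apply Real.sqrt_le_sqrt
    refine Finset.sum_le_sum fun i _ => Finset.sum_le_sum fun j _ => ?_
    exact pow_le_pow_left₀ (norm_nonneg _) (hentry i j) 2
  refine h2.trans ?_
  have h3 : (∑ _i : Fin (n + 1), ∑ _j : Fin (n + 1), K ^ 2) = (((n : ℝ) + 1) * K) ^ 2 := by
    simp [Finset.sum_const, Finset.card_univ]
    ring
  rw [h3, Real.sqrt_sq (by positivity)]
  rw [Nat.factorial_succ]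
  push_cast
  rw [hK]
  ring_nf
  exact le_refl _

/-- `‖v⁻¹ u v‖ ≤ (m+1)! ⬝ (‖v‖^m / |det v|) ⬝ ‖u‖` for the Frobenius norm. -/
theorem stmt5 {m : ℕ} (u v : Matrix (Fin m) (Fin m) ℂ) (hv : IsUnit v.det) :
    frobNorm (v⁻¹ * u * v) ≤
      (m + 1).factorial * (frobNorm v ^ m / ‖v.det‖) * frobNorm u := by
  have hdet : (0 : ℝ) < ‖v.det‖ := by
    rw [norm_pos_iff]
    exact hv.ne_zero
  cases m with
  | zero =>
    have h0 : frobNorm (v⁻¹ * u * v) = 0 := by simp [frobNorm]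
    have h1 : frobNorm u = 0 := by simp [frobNorm]
    rw [h0, h1, mul_zero]
  | succ n =>
    have hu := frobNorm_nonneg u
    have hvn := frobNorm_nonneg v
    have hinv : frobNorm v⁻¹ ≤ (n + 1).factorial * frobNorm v ^ n / ‖v.det‖ := by
      rw [Matrix.inv_def, Ring.inverse_eq_inv, frobNorm_smul, norm_inv]
      rw [div_eq_mul_inv, mul_comm]
      apply mul_le_mul_of_nonneg_right (frobNorm_adjugate_le v)
      positivity
    have hstep : frobNorm (v⁻¹ * u * v) ≤ frobNorm v⁻¹ * frobNorm u * frobNorm v :=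
      (frobNorm_mul_le _ _).trans
        (mul_le_mul_of_nonneg_right (frobNorm_mul_le _ _) hvn)
    refine hstep.trans ?_
    calc frobNorm v⁻¹ * frobNorm u * frobNorm v
        ≤ ((n + 1).factorial * frobNorm v ^ n / ‖v.det‖) * frobNorm u * frobNorm v := by
          gcongr
      _ = (n + 1).factorial * (frobNorm v ^ (n + 1) / ‖v.det‖) * frobNorm u := by
          rw [pow_succ]; field_simp
      _ ≤ (n + 1 + 1).factorial * (frobNorm v ^ (n + 1) / ‖v.det‖) * frobNorm u := by
          have hfact : ((n + 1).factorial : ℝ) ≤ ((n + 1 + 1).factorial : ℝ) := by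
            exact_mod_cast Nat.factorial_le (Nat.le_succ _)
          gcongr
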